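/- Let C be a precategory (category). For (f, g) ∈ U_C(X) (so f : X ⟶ Y and g : Z ⟶ Y), (f', g') ∈ Ũ_C(X') (so f' : X' ⟶ Z' and g' : Z' ⟶ Y') and u : X' ⟶ X, the square in the category of presheaves of sets on C with top arrow ṽ(f', g') : Yo(X') ⟶ Ũ_C, left arrow Yo(u) : Yo(X') ⟶ Yo(X), right arrow p_C : Ũ_C ⟶ U_C and bottom arrow v(f, g) : Yo(X) ⟶ U_C commutes if and only if g' = g (in particular Z' = Z, Y' = Y) and the square in C with top arrow f' : X' ⟶ Z, left arrow u : X' ⟶ X, right arrow g : Z ⟶ Y and bottom arrow f : X ⟶ Y commutes. -/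

import Mathlib

open CategoryTheory Limits Opposite

universe u

variable (C : Type u) [SmallCategory C]

/-- The presheaf `U_C` with `U_C(X) = {(f, g) : f : X ⟶ Y, g : Z ⟶ Y}`,
encoded as `⟨Y, Z, f, g⟩`, with restriction `(f, g) ↦ (a ≫ f, g)`. -/
def UPsh : Cᵒᵖ ⥤ Type u where
  obj X := Σ (Y : C) (Z : C), (unop X ⟶ Y) × (Z ⟶ Y)
  map a := TypeCat.ofHom fun s => ⟨s.1, s.2.1, a.unop ≫ s.2.2.1, s.2.2.2⟩
  map_id := by intro X; apply ConcreteCategory.hom_ext; intro s; simp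
  map_comp := by intro X Y Z a b; apply ConcreteCategory.hom_ext; intro s; simp

/-- The presheaf `Ũ_C` with `Ũ_C(X) = {(f', g) : f' : X ⟶ Z, g : Z ⟶ Y}`,
encoded as `⟨Z, Y, f', g⟩`, with restriction `(f', g) ↦ (a ≫ f', g)`. -/
def UtildePsh : Cᵒᵖ ⥤ Type u where
  obj X := Σ (Z : C) (Y : C), (unop X ⟶ Z) × (Z ⟶ Y)
  map a := TypeCat.ofHom fun s => ⟨s.1, s.2.1, a.unop ≫ s.2.2.1, s.2.2.2⟩
  map_id := by intro X; apply ConcreteCategory.hom_ext; intro s; simp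
  map_comp := by intro X Y Z a b; apply ConcreteCategory.hom_ext; intro s; simp

/-- The morphism of presheaves `p_C : Ũ_C ⟶ U_C`, `(f', g) ↦ (f' ≫ g, g)`. -/
def pPsh : UtildePsh C ⟶ UPsh C where
  app X := TypeCat.ofHom fun s => ⟨s.2.1, s.1, s.2.2.1 ≫ s.2.2.2, s.2.2.2⟩
  naturality := by intro X Y a; apply ConcreteCategory.hom_ext; intro s; exact Sigma.ext rfl (heq_of_eq (Sigma.ext rfl (heq_of_eq (Prod.ext (Category.assoc _ _ _) rfl))))

/-- Lemma 2015.07.25.l1 (commutativity part): for `(f, g) ∈ U_C(X)`,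
`(f', g') ∈ Ũ_C(X')` and `u : X' ⟶ X`, the square in presheaves with top
`ṽ(f', g')`, left `Yo(u)`, right `p_C` and bottom `v(f, g)` commutes iff
`g' = g` (in particular `Z' = Z`, `Y' = Y`) and the square in `C` with top `f'`,
left `u`, right `g`, bottom `f` commutes. -/
theorem uPsh_square_commutes_iff {C : Type u} [SmallCategory C]
    {X X' Y Z Y' Z' : C} (f : X ⟶ Y) (g : Z ⟶ Y) (f' : X' ⟶ Z') (g' : Z' ⟶ Y')
    (u : X' ⟶ X) :
    (yonedaEquiv.symm (⟨Z', Y', f', g'⟩ : (UtildePsh C).obj (op X')) ≫ pPsh C =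
        yoneda.map u ≫ yonedaEquiv.symm (⟨Y, Z, f, g⟩ : (UPsh C).obj (op X))) ↔
      ∃ (hZ : Z' = Z) (_hY : Y' = Y), HEq g' g ∧ u ≫ f = (f' ≫ eqToHom hZ) ≫ g := by
  rw [← Equiv.apply_eq_iff_eq yonedaEquiv, yonedaEquiv_comp]
  erw [Equiv.apply_symm_apply]
  rw [← yonedaEquiv_naturality]
  erw [Equiv.apply_symm_apply]
  show (⟨Y', Z', f' ≫ g', g'⟩ : (UPsh C).obj (op X')) = ⟨Y, Z, u ≫ f, g⟩ ↔ _
  constructor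
  · intro h
    obtain ⟨hY, h⟩ := Sigma.mk.inj_iff.mp h
    subst hY
    obtain ⟨hZ, h⟩ := Sigma.mk.inj_iff.mp (eq_of_heq h)
    subst hZ
    obtain ⟨h1, h2⟩ := Prod.mk.injEq _ _ _ _ ▸ eq_of_heq h
    exact ⟨rfl, rfl, heq_of_eq h2, by simp [← h1, h2]⟩
  · rintro ⟨rfl, rfl, hg, hc⟩
    obtain rfl := eq_of_heq hg
    simp at hc
    simp [hc]
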